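/- Let A ⊆ 𝕋_N^d, M ∈ ℝ, ε > 0, and let (h_v) be any external field. If the ground state τ_M of the RFIM Hamiltonian H(σ) = −Σ_{u∼v} σ_u σ_v − Σ_v (M + ε h_v) σ_v satisfies τ_M ≡ −1 on ∂_i A and τ_M ≡ +1 on ∂_o A (or vice versa), then the ground state energy 𝓗^A_M with respect to the flipped field h^A satisfies 𝓗^A_M ≤ 𝓗_M − 2|∂_e A| + 2|M||A|. -/
import Mathlib

open scoped Classical

/-- Nearest-neighbor adjacency on the torus `𝕋_N^d = (ℤ/Nℤ)^d`. -/
def torusAdj {N d : ℕ} (u v : Fin d → ZMod N) : Prop :=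
  u ≠ v ∧ ∃ i : Fin d,
    v = Function.update u i (u i + 1) ∨ v = Function.update u i (u i - 1)

/-- `σ` is a `±1`-valued spin configuration. -/
def IsSpin {N d : ℕ} (σ : (Fin d → ZMod N) → ℤ) : Prop :=
  ∀ v, σ v = 1 ∨ σ v = -1

/-- The RFIM Hamiltonian `H(σ) = -Σ_{u∼v} σ_u σ_v - Σ_v (M + ε h_v) σ_v` on the torus
(each unordered edge counted once, via half the ordered sum). -/
noncomputable def ham (N d : ℕ) [NeZero N] (M ε : ℝ)
    (h : (Fin d → ZMod N) → ℝ) (σ : (Fin d → ZMod N) → ℤ) : ℝ :=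
  -(1 / 2) * ∑ u : Fin d → ZMod N, ∑ v : Fin d → ZMod N,
      (if torusAdj u v then (σ u : ℝ) * (σ v : ℝ) else 0)
    - ∑ v : Fin d → ZMod N, (M + ε * h v) * (σ v : ℝ)

/-- Ground state energy: the infimum of the Hamiltonian over spin configurations. -/
noncomputable def groundEnergy (N d : ℕ) [NeZero N] (M ε : ℝ)
    (h : (Fin d → ZMod N) → ℝ) : ℝ :=
  sInf (ham N d M ε h '' {σ | IsSpin σ})

/-- The field obtained from `h` by negating it on `A`. -/
noncomputable def flipField {N d : ℕ} (A : Set (Fin d → ZMod N))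
    (h : (Fin d → ZMod N) → ℝ) : (Fin d → ZMod N) → ℝ :=
  fun v => if v ∈ A then -h v else h v

/-- The edge boundary `∂ₑA`: ordered pairs `(x, y)` with `x ∈ A`, `y ∉ A`, `x ∼ y`. -/
def edgeBdry {N d : ℕ} (A : Set (Fin d → ZMod N)) :
    Set ((Fin d → ZMod N) × (Fin d → ZMod N)) :=
  {p | p.1 ∈ A ∧ p.2 ∉ A ∧ torusAdj p.1 p.2}

lemma torusAdj_symm {N d : ℕ} {u v : Fin d → ZMod N} (h : torusAdj u v) :
    torusAdj v u := by
  obtain ⟨hne, i, hi⟩ := h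
  refine ⟨hne.symm, i, ?_⟩
  rcases hi with hi | hi
  · right
    subst hi
    funext j
    rcases eq_or_ne j i with rfl | hj
    · simp
    · simp [Function.update_apply, hj]
  · left
    subst hi
    funext j
    rcases eq_or_ne j i with rfl | hj
    · simp
    · simp [Function.update_apply, hj]

lemma spin_finite {N d : ℕ} [NeZero N] :
    ({σ | IsSpin σ} : Set ((Fin d → ZMod N) → ℤ)).Finite := by
  have hsub : ({σ | IsSpin σ} : Set ((Fin d → ZMod N) → ℤ)) ⊆
      Set.pi Set.univ (fun _ => ({1, -1} : Set ℤ)) := by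
    intro σ hσ v _
    rcases hσ v with h | h <;> simp [h]
  exact (Set.Finite.pi (fun _ => Set.toFinite _)).subset hsub

lemma sum_indicator_ncard {α : Type*} [Fintype α] (s : Set α) (c : ℝ) :
    ∑ x : α, (if x ∈ s then c else 0) = c * s.ncard := by
  classical
  have hfs : (Set.toFinite s).toFinset = Finset.univ.filter (· ∈ s) := by
    ext x
    simp only [Set.Finite.mem_toFinset, Finset.mem_filter, Finset.mem_univ, true_and]
  rw [Finset.sum_ite, Finset.sum_const_zero, add_zero, Finset.sum_const, nsmul_eq_mul,
    Set.ncard_eq_toFinset_card _ (Set.toFinite s), hfs, mul_comm]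

theorem groundEnergy_flip_le (N d : ℕ) [NeZero N] (A : Set (Fin d → ZMod N))
    (M ε : ℝ) (hε : 0 < ε) (h : (Fin d → ZMod N) → ℝ)
    (τ : (Fin d → ZMod N) → ℤ) (hτ : IsSpin τ)
    (hmin : ham N d M ε h τ = groundEnergy N d M ε h)
    (hbdry :
      ((∀ x, x ∈ A → (∃ y, y ∉ A ∧ torusAdj x y) → τ x = -1) ∧
        (∀ y, y ∉ A → (∃ x, x ∈ A ∧ torusAdj y x) → τ y = 1)) ∨
      ((∀ x, x ∈ A → (∃ y, y ∉ A ∧ torusAdj x y) → τ x = 1) ∧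
        (∀ y, y ∉ A → (∃ x, x ∈ A ∧ torusAdj y x) → τ y = -1))) :
    groundEnergy N d M ε (flipField A h)
      ≤ groundEnergy N d M ε h - 2 * (edgeBdry A).ncard + 2 * |M| * A.ncard := by
  classical
  set σ' : (Fin d → ZMod N) → ℤ := fun v => if v ∈ A then -τ v else τ v with hσ'def
  have hspin' : IsSpin σ' := by
    intro v
    rcases hτ v with h1 | h1 <;> by_cases hv : v ∈ A <;> simp [σ', hv, h1]
  have hσ'in : ∀ w, w ∈ A → (σ' w : ℝ) = -(τ w : ℝ) := by
    intro w hw; simp [σ', hw]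
  have hσ'out : ∀ w, w ∉ A → (σ' w : ℝ) = (τ w : ℝ) := by
    intro w hw; simp [σ', hw]
  have hprod : ∀ u v : Fin d → ZMod N, u ∈ A → v ∉ A → torusAdj u v →
      (τ u : ℝ) * (τ v : ℝ) = -1 := by
    intro u v hu hv hadj
    rcases hbdry with ⟨h1, h2⟩ | ⟨h1, h2⟩
    · rw [h1 u hu ⟨v, hv, hadj⟩, h2 v hv ⟨u, hu, torusAdj_symm hadj⟩]; norm_num
    · rw [h1 u hu ⟨v, hv, hadj⟩, h2 v hv ⟨u, hu, torusAdj_symm hadj⟩]; norm_num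
  -- per-pair interaction identity
  have hpair : ∀ u v : Fin d → ZMod N,
      (if torusAdj u v then (σ' u : ℝ) * (σ' v : ℝ) else 0) =
      (if torusAdj u v then (τ u : ℝ) * (τ v : ℝ) else 0)
        + ((if (u, v) ∈ edgeBdry A then (2 : ℝ) else 0)
          + (if (v, u) ∈ edgeBdry A then (2 : ℝ) else 0)) := by
    intro u v
    by_cases hadj : torusAdj u v
    · by_cases hu : u ∈ A <;> by_cases hv : v ∈ A
      · have e1 : (u, v) ∉ edgeBdry A := fun hc => hc.2.1 hv
        have e2 : (v, u) ∉ edgeBdry A := fun hc => hc.2.1 hu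
        rw [if_pos hadj, if_pos hadj, if_neg e1, if_neg e2, hσ'in u hu, hσ'in v hv]
        ring
      · have e1 : (u, v) ∈ edgeBdry A := ⟨hu, hv, hadj⟩
        have e2 : (v, u) ∉ edgeBdry A := fun hc => hv hc.1
        rw [if_pos hadj, if_pos hadj, if_pos e1, if_neg e2, hσ'in u hu, hσ'out v hv]
        have := hprod u v hu hv hadj
        nlinarith [this]
      · have e1 : (u, v) ∉ edgeBdry A := fun hc => hu hc.1
        have e2 : (v, u) ∈ edgeBdry A := ⟨hv, hu, torusAdj_symm hadj⟩
        rw [if_pos hadj, if_pos hadj, if_neg e1, if_pos e2, hσ'out u hu, hσ'in v hv]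
        have := hprod v u hv hu (torusAdj_symm hadj)
        nlinarith [this]
      · have e1 : (u, v) ∉ edgeBdry A := fun hc => hu hc.1
        have e2 : (v, u) ∉ edgeBdry A := fun hc => hv hc.1
        rw [if_pos hadj, if_pos hadj, if_neg e1, if_neg e2, hσ'out u hu, hσ'out v hv]
        ring
    · have e1 : (u, v) ∉ edgeBdry A := fun hc => hadj hc.2.2
      have e2 : (v, u) ∉ edgeBdry A := fun hc => hadj (torusAdj_symm hc.2.2)
      rw [if_neg hadj, if_neg hadj, if_neg e1, if_neg e2]
      ring
  -- counting
  have hcount : ∑ p : (Fin d → ZMod N) × (Fin d → ZMod N),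
      (if p ∈ edgeBdry A then (2 : ℝ) else 0) = 2 * (edgeBdry A).ncard :=
    sum_indicator_ncard _ _
  have c1 : ∑ u : Fin d → ZMod N, ∑ v : Fin d → ZMod N,
      (if (u, v) ∈ edgeBdry A then (2 : ℝ) else 0) = 2 * (edgeBdry A).ncard := by
    rw [← hcount]
    exact (Fintype.sum_prod_type (f := fun p : (Fin d → ZMod N) × (Fin d → ZMod N) => if p ∈ edgeBdry A then (2:ℝ) else 0)).symm
  have c2 : ∑ u : Fin d → ZMod N, ∑ v : Fin d → ZMod N,
      (if (v, u) ∈ edgeBdry A then (2 : ℝ) else 0) = 2 * (edgeBdry A).ncard := by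
    rw [← hcount, Finset.sum_comm]
    exact (Fintype.sum_prod_type (f := fun p : (Fin d → ZMod N) × (Fin d → ZMod N) => if p ∈ edgeBdry A then (2:ℝ) else 0)).symm
  -- interaction sum identity
  have e1 : ∑ u : Fin d → ZMod N, ∑ v : Fin d → ZMod N,
        (if torusAdj u v then (σ' u : ℝ) * (σ' v : ℝ) else 0)
      = (∑ u : Fin d → ZMod N, ∑ v : Fin d → ZMod N,
          (if torusAdj u v then (τ u : ℝ) * (τ v : ℝ) else 0))
        + 4 * (edgeBdry A).ncard := by
    have : ∑ u : Fin d → ZMod N, ∑ v : Fin d → ZMod N,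
        (if torusAdj u v then (σ' u : ℝ) * (σ' v : ℝ) else 0)
        = ∑ u : Fin d → ZMod N, ∑ v : Fin d → ZMod N,
          ((if torusAdj u v then (τ u : ℝ) * (τ v : ℝ) else 0)
            + ((if (u, v) ∈ edgeBdry A then (2 : ℝ) else 0)
              + (if (v, u) ∈ edgeBdry A then (2 : ℝ) else 0))) :=
      Finset.sum_congr rfl fun u _ => Finset.sum_congr rfl fun v _ => hpair u v
    rw [this]
    simp only [Finset.sum_add_distrib]
    rw [c1, c2]
    ring
  -- field sum identity
  have e2 : ∑ v : Fin d → ZMod N, (M + ε * flipField A h v) * (σ' v : ℝ)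
      = (∑ v : Fin d → ZMod N, (M + ε * h v) * (τ v : ℝ))
        - ∑ v : Fin d → ZMod N, (if v ∈ A then 2 * M * (τ v : ℝ) else 0) := by
    rw [← Finset.sum_sub_distrib]
    refine Finset.sum_congr rfl fun v _ => ?_
    by_cases hv : v ∈ A
    · rw [hσ'in v hv, if_pos hv]
      simp only [flipField, if_pos hv]
      ring
    · rw [hσ'out v hv, if_neg hv]
      simp only [flipField, if_neg hv]
      ring
  -- field bound
  have hfb : ∑ v : Fin d → ZMod N, (if v ∈ A then 2 * M * (τ v : ℝ) else 0)
      ≤ 2 * |M| * A.ncard := by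
    calc ∑ v : Fin d → ZMod N, (if v ∈ A then 2 * M * (τ v : ℝ) else 0)
        ≤ ∑ v : Fin d → ZMod N, (if v ∈ A then 2 * |M| else 0) := by
          refine Finset.sum_le_sum fun v _ => ?_
          by_cases hv : v ∈ A
          · rw [if_pos hv, if_pos hv]
            rcases hτ v with h1 | h1 <;> rw [h1] <;> push_cast <;>
              cases abs_cases M <;> nlinarith
          · rw [if_neg hv, if_neg hv]
      _ = 2 * |M| * A.ncard := sum_indicator_ncard _ _
  have hham : ham N d M ε (flipField A h) σ'
      = ham N d M ε h τ - 2 * (edgeBdry A).ncard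
        + ∑ v : Fin d → ZMod N, (if v ∈ A then 2 * M * (τ v : ℝ) else 0) := by
    unfold ham
    rw [e1, e2]
    ring
  have hmem : ham N d M ε (flipField A h) σ'
      ∈ ham N d M ε (flipField A h) '' {σ | IsSpin σ} := ⟨σ', hspin', rfl⟩
  have hbdd : BddBelow (ham N d M ε (flipField A h) '' {σ | IsSpin σ}) :=
    (spin_finite.image _).bddBelow
  calc groundEnergy N d M ε (flipField A h) ≤ ham N d M ε (flipField A h) σ' :=
        csInf_le hbdd hmem
    _ = ham N d M ε h τ - 2 * (edgeBdry A).ncard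
        + ∑ v : Fin d → ZMod N, (if v ∈ A then 2 * M * (τ v : ℝ) else 0) := hham
    _ ≤ ham N d M ε h τ - 2 * (edgeBdry A).ncard + 2 * |M| * A.ncard := by linarith
    _ = groundEnergy N d M ε h - 2 * (edgeBdry A).ncard + 2 * |M| * A.ncard := by
        rw [hmin]
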